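/- Let ≤ be a monomial well-order on FreeMagma E and let I be a two-sided ideal of A. Then for every f ∈ A there exists a unique g ∈ Span_ℚ(O(I)) with f − g ∈ I (the canonical form Can(f, I) of f). Moreover, for f, f' ∈ A one has Can(f, I) = Can(f', I) if and only if f − f' ∈ I, and Can(f, I) = 0 if and only if f ∈ I. -/

import Mathlib

/-- The monomial corresponding to an element of the free magma, inside the free
non-unital non-associative algebra. -/
noncomputable def magmaMonomial {E : Type*} (z : FreeMagma E) :
    FreeNonUnitalNonAssocAlgebra ℚ E :=
  MonoidAlgebra.single z (1 : ℚ)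

/-- A ℚ-submodule of the magma algebra which is stable under left and right
multiplication by arbitrary elements: a two-sided ideal. -/
def IsTwoSidedIdealSubmodule {E : Type*}
    (I : Submodule ℚ (FreeNonUnitalNonAssocAlgebra ℚ E)) : Prop :=
  ∀ a x : FreeNonUnitalNonAssocAlgebra ℚ E, x ∈ I → a * x ∈ I ∧ x * a ∈ I

/-- The maximal term `T f` of a nonzero element `f` of the magma algebra: the largest
monomial in its support, with respect to a given linear order on the free magma. -/
noncomputable def maxTerm {E : Type*} [LinearOrder (FreeMagma E)]
    (f : FreeNonUnitalNonAssocAlgebra ℚ E) (hf : f ≠ 0) : FreeMagma E :=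
  f.coeff.support.max' (Finsupp.support_nonempty_iff.mpr (mt MonoidAlgebra.coeff_eq_zero.mp hf))

/-- `T I`: the set of maximal terms of nonzero elements of `I`. -/
def maxTermSet {E : Type*} [LinearOrder (FreeMagma E)]
    (I : Submodule ℚ (FreeNonUnitalNonAssocAlgebra ℚ E)) : Set (FreeMagma E) :=
  {z | ∃ (f : FreeNonUnitalNonAssocAlgebra ℚ E) (hf : f ≠ 0), f ∈ I ∧ maxTerm f hf = z}

/-- `O I`: the complement of `T I` in the free magma. -/
def outTermSet {E : Type*} [LinearOrder (FreeMagma E)]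
    (I : Submodule ℚ (FreeNonUnitalNonAssocAlgebra ℚ E)) : Set (FreeMagma E) :=
  (maxTermSet I)ᶜ

/-- Canonical forms: for a monomial well-order on the free magma and a two-sided ideal
`I` of the magma algebra, every `f` has a unique canonical form `g ∈ Span(O(I))` with
`f - g ∈ I`; two elements have the same canonical form iff they differ by an element
of `I`, and the canonical form vanishes iff `f ∈ I`. -/
theorem canonical_form_exists_unique (E : Type*) [LinearOrder (FreeMagma E)]
    (hmono : ∀ x y z : FreeMagma E, x < y → x * z < y * z ∧ z * x < z * y)
    (hwell : ∀ S : Set (FreeMagma E), S.Nonempty → ∃ m ∈ S, ∀ x ∈ S, m ≤ x)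
    (I : Submodule ℚ (FreeNonUnitalNonAssocAlgebra ℚ E))
    (hI : IsTwoSidedIdealSubmodule I) :
    (∀ f : FreeNonUnitalNonAssocAlgebra ℚ E,
      ∃! g : FreeNonUnitalNonAssocAlgebra ℚ E,
        g ∈ Submodule.span ℚ (magmaMonomial '' outTermSet I) ∧ f - g ∈ I) ∧
    (∀ f f' g g' : FreeNonUnitalNonAssocAlgebra ℚ E,
      g ∈ Submodule.span ℚ (magmaMonomial '' outTermSet I) → f - g ∈ I →
      g' ∈ Submodule.span ℚ (magmaMonomial '' outTermSet I) → f' - g' ∈ I →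
      (g = g' ↔ f - f' ∈ I)) ∧
    (∀ f g : FreeNonUnitalNonAssocAlgebra ℚ E,
      g ∈ Submodule.span ℚ (magmaMonomial '' outTermSet I) → f - g ∈ I →
      (g = 0 ↔ f ∈ I)) := by
  classical
  set S := Submodule.span ℚ (magmaMonomial '' outTermSet I) with hS
  have hSeq : S = MonoidAlgebra.supported ℚ ℚ (outTermSet I) := by
    rw [hS, MonoidAlgebra.supported_eq_span_single]
    rfl
  have hsupp : ∀ g : FreeNonUnitalNonAssocAlgebra ℚ E, g ∈ S →
      ∀ w ∈ g.coeff.support, w ∈ outTermSet I := by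
    intro g hg w hw
    rw [hSeq, MonoidAlgebra.mem_supported] at hg
    exact hg hw
  have hkey : ∀ h : FreeNonUnitalNonAssocAlgebra ℚ E, h ∈ I → h ∈ S → h = 0 := by
    intro h hI' hS'
    by_contra hne
    have hm : maxTerm h hne ∈ h.coeff.support := Finset.max'_mem _ _
    exact (hsupp h hS' _ hm) ⟨h, hne, hI', rfl⟩
  have uniq : ∀ g g' : FreeNonUnitalNonAssocAlgebra ℚ E, g ∈ S → g' ∈ S →
      g - g' ∈ I → g = g' := by
    intro g g' hg hg' hgg'
    exact sub_eq_zero.mp (hkey _ hgg' (S.sub_mem hg hg'))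
  have wf : WellFounded ((· < ·) : FreeMagma E → FreeMagma E → Prop) := by
    rw [WellFounded.wellFounded_iff_has_min]
    intro s hs
    obtain ⟨m, hm, hmin⟩ := hwell s hs
    exact ⟨m, hm, fun x hx => not_lt.mpr (hmin x hx)⟩
  have exist : ∀ f : FreeNonUnitalNonAssocAlgebra ℚ E, ∃ g, g ∈ S ∧ f - g ∈ I := by
    have main : ∀ z : FreeMagma E, ∀ f : FreeNonUnitalNonAssocAlgebra ℚ E,
        (∀ w ∈ f.coeff.support, w ≤ z) → ∃ g, g ∈ S ∧ f - g ∈ I := by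
      refine fun z => WellFounded.induction (C := fun z => ∀ f : FreeNonUnitalNonAssocAlgebra ℚ E,
        (∀ w ∈ f.coeff.support, w ≤ z) → ∃ g, g ∈ S ∧ f - g ∈ I) wf z ?_
      intro z IH f hfz
      by_cases hf0 : f = 0
      · exact ⟨0, S.zero_mem, by simp [hf0]⟩
      set m := maxTerm f hf0 with hm
      have hmmem : m ∈ f.coeff.support := Finset.max'_mem _ _
      have hmz : m ≤ z := hfz m hmmem
      have hfm : f.coeff m ≠ 0 := Finsupp.mem_support_iff.mp hmmem
      by_cases hmT : m ∈ maxTermSet I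
      · obtain ⟨h, hh0, hhI, hhm⟩ := hmT
        have hhmem : m ∈ h.coeff.support := by
          have := Finset.max'_mem h.coeff.support (Finsupp.support_nonempty_iff.mpr (mt MonoidAlgebra.coeff_eq_zero.mp hh0))
          rwa [show h.coeff.support.max' _ = m from hhm] at this
        have hhm_ne : h.coeff m ≠ 0 := Finsupp.mem_support_iff.mp hhmem
        set c : ℚ := f.coeff m / h.coeff m with hc
        set f' : FreeNonUnitalNonAssocAlgebra ℚ E := f - c • h with hf'
        have hsub : f - f' ∈ I := by
          have heq : f - f' = c • h := by rw [hf']; abel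
          rw [heq]; exact I.smul_mem c hhI
        have hf'm : f'.coeff m = 0 := by
          rw [hf']
          have h1 : (f - c • h).coeff m = f.coeff m - (c • h).coeff m := by
            rw [MonoidAlgebra.coeff_sub, Finsupp.sub_apply]
          have h2 : (c • h).coeff m = c * h.coeff m := by
            rw [MonoidAlgebra.coeff_smul, Finsupp.smul_apply, smul_eq_mul]
          rw [h1, h2, hc, div_mul_cancel₀ _ hhm_ne, sub_self]
        have hf'lt : ∀ w ∈ f'.coeff.support, w < m := by
          intro w hw
          have hwne : w ≠ m := by
            rintro rfl
            exact (Finsupp.mem_support_iff.mp hw) hf'm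
          have hw' : w ∈ f.coeff.support ∪ (c • h).coeff.support := by
            rw [MonoidAlgebra.coeff_sub] at hw; exact Finsupp.support_sub hw
          have hwle : w ≤ m := by
            rcases Finset.mem_union.mp hw' with h1 | h2
            · exact Finset.le_max' _ _ h1
            · have : w ∈ h.coeff.support := by
                rw [MonoidAlgebra.coeff_smul] at h2; exact Finsupp.support_smul h2
              have := Finset.le_max' h.coeff.support w this
              rwa [show h.coeff.support.max' _ = m from hhm] at this
          exact lt_of_le_of_ne hwle hwne
        by_cases hf'0 : f' = 0
        · refine ⟨0, S.zero_mem, ?_⟩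
          rw [sub_zero]
          have := hsub
          rwa [hf'0, sub_zero] at this
        · have hm' : maxTerm f' hf'0 < z :=
            lt_of_lt_of_le (hf'lt _ (Finset.max'_mem _ _)) hmz
          obtain ⟨g, hgS, hgI⟩ := IH (maxTerm f' hf'0) hm' f'
            (fun w hw => Finset.le_max' _ _ hw)
          refine ⟨g, hgS, ?_⟩
          have heq : f - g = (f - f') + (f' - g) := by abel
          rw [heq]
          exact I.add_mem hsub hgI
      · have hmono_mem : magmaMonomial m ∈ S :=
          Submodule.subset_span ⟨m, hmT, rfl⟩
        set c : ℚ := f.coeff m with hc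
        set f' : FreeNonUnitalNonAssocAlgebra ℚ E := f - c • magmaMonomial m with hf'
        have hf'm : f'.coeff m = 0 := by
          rw [hf']
          have h1 : (f - c • magmaMonomial m).coeff m = f.coeff m - (c • magmaMonomial m).coeff m := by
            rw [MonoidAlgebra.coeff_sub, Finsupp.sub_apply]
          have h2 : (c • magmaMonomial m).coeff m = c * (magmaMonomial m).coeff m := by
            rw [MonoidAlgebra.coeff_smul, Finsupp.smul_apply, smul_eq_mul]
          have h3 : (magmaMonomial m).coeff m = 1 := Finsupp.single_eq_same
          rw [h1, h2, h3, hc, mul_one, sub_self]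
        have hf'lt : ∀ w ∈ f'.coeff.support, w < m := by
          intro w hw
          have hwne : w ≠ m := by
            rintro rfl
            exact (Finsupp.mem_support_iff.mp hw) hf'm
          have hw' : w ∈ f.coeff.support ∪ (c • magmaMonomial m).coeff.support := by
            rw [MonoidAlgebra.coeff_sub] at hw; exact Finsupp.support_sub hw
          have hwle : w ≤ m := by
            rcases Finset.mem_union.mp hw' with h1 | h2
            · exact Finset.le_max' _ _ h1
            · have : w ∈ (magmaMonomial m).coeff.support := by
                rw [MonoidAlgebra.coeff_smul] at h2; exact Finsupp.support_smul h2
              have := Finsupp.support_single_subset this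
              simp only [Finset.mem_singleton] at this
              exact this.le
          exact lt_of_le_of_ne hwle hwne
        by_cases hf'0 : f' = 0
        · refine ⟨c • magmaMonomial m, S.smul_mem c hmono_mem, ?_⟩
          have : f - c • magmaMonomial m = f' := hf'.symm
          rw [this, hf'0]
          exact I.zero_mem
        · have hm' : maxTerm f' hf'0 < z :=
            lt_of_lt_of_le (hf'lt _ (Finset.max'_mem _ _)) hmz
          obtain ⟨g', hg'S, hg'I⟩ := IH (maxTerm f' hf'0) hm' f'
            (fun w hw => Finset.le_max' _ _ hw)
          refine ⟨g' + c • magmaMonomial m, S.add_mem hg'S (S.smul_mem c hmono_mem), ?_⟩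
          have heq : f - (g' + c • magmaMonomial m) = f' - g' := by
            rw [hf']; abel
          rw [heq]
          exact hg'I
    intro f
    by_cases hf : f = 0
    · exact ⟨0, S.zero_mem, by simp [hf]⟩
    · exact main (maxTerm f hf) f (fun w hw => Finset.le_max' _ _ hw)
  refine ⟨?_, ?_, ?_⟩
  · intro f
    obtain ⟨g, hg1, hg2⟩ := exist f
    refine ⟨g, ⟨hg1, hg2⟩, ?_⟩
    rintro y ⟨hy1, hy2⟩
    refine uniq y g hy1 hg1 ?_
    have := I.sub_mem hg2 hy2
    have heq : y - g = (f - g) - (f - y) := by abel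
    rwa [heq]
  · intro f f' g g' hg hfg hg' hfg'
    constructor
    · intro heq
      have := I.sub_mem hfg hfg'
      rw [heq] at hfg
      have h2 := I.sub_mem hfg hfg'
      have heq2 : f - f' = (f - g') - (f' - g') := by abel
      rwa [heq2]
    · intro hff'
      refine uniq g g' hg hg' ?_
      have h1 := I.add_mem (I.sub_mem hfg' hfg) hff'
      have heq : g - g' = ((f' - g') - (f - g)) + (f - f') := by abel
      rwa [heq]
  · intro f g hg hfg
    constructor
    · intro h0
      rw [h0, sub_zero] at hfg
      exact hfg
    · intro hf
      refine hkey g ?_ hg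
      have := I.sub_mem hf hfg
      have heq : g = f - (f - g) := by abel
      rwa [heq]
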